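/- A perfect matching M on {1,...,2n} with at least one crossing pair a<b<c<d (a∼c, b∼d in M) satisfies Δ_M = Δ_{M'} + Δ_{M''}, where M' replaces the pairs {a,c},{b,d} by {a,b},{c,d} and M'' replaces them by {a,d},{b,c}, and both M' and M'' have strictly fewer crossing pairs than M. -/

import Mathlib

open MvPolynomial Finset

noncomputable section

/-- The polynomial ring ℂ[x_{ij}] for a 2 × (2n) matrix of indeterminates. -/
abbrev PolyR (n : ℕ) := MvPolynomial (Fin 2 × Fin (2 * n)) ℂ

/-- The 2×2 minor Δ_{ab} = x_{1a} x_{2b} - x_{1b} x_{2a} (rows 0,1 in 0-indexing). -/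
def Delta {n : ℕ} (a b : Fin (2 * n)) : PolyR n :=
  X (0, a) * X (1, b) - X (0, b) * X (1, a)

/-- A perfect matching on {1,…,2n}, encoded as a fixed-point-free involution. -/
structure PM (n : ℕ) where
  f : Fin (2 * n) → Fin (2 * n)
  invol : ∀ i, f (f i) = i
  nofix : ∀ i, f i ≠ i

/-- The product Δ_M of the minors over the blocks of a perfect matching M. -/
def DeltaM {n : ℕ} (M : PM n) : PolyR n :=
  ∏ i ∈ Finset.univ.filter (fun i => i < M.f i), Delta i (M.f i)

/-- M is noncrossing: no a < b < c < d with a ∼ c and b ∼ d. -/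
def Noncrossing {n : ℕ} (M : PM n) : Prop :=
  ¬ ∃ a b c d : Fin (2 * n), a < b ∧ b < c ∧ c < d ∧ M.f a = c ∧ M.f b = d

/-- The number of crossing pairs a < b < c < d with a ∼ c, b ∼ d in M. -/
def crossings {n : ℕ} (M : PM n) : ℕ :=
  ((Finset.univ : Finset (Fin (2 * n) × Fin (2 * n))).filter
    (fun p => p.1 < p.2 ∧ p.2 < M.f p.1 ∧ M.f p.1 < M.f p.2)).card

/- ### Auxiliary material -/

/-- The modified matching function: swap the blocks so that `p ∼ q` and `r ∼ s`. -/
private def pairSwap {m : ℕ} (f : Fin m → Fin m) (p q r s : Fin m) : Fin m → Fin m :=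
  fun k => if k = p then q else if k = q then p else if k = r then s else if k = s then r else f k

private lemma pairSwap_invol {m : ℕ} (f : Fin m → Fin m) (p q r s : Fin m)
    (hinv : ∀ i, f (f i) = i)
    (hpq : p ≠ q) (hpr : p ≠ r) (hps : p ≠ s) (hqr : q ≠ r) (hqs : q ≠ s) (hrs : r ≠ s)
    (hclosed : ∀ k, k ≠ p → k ≠ q → k ≠ r → k ≠ s →
      f k ≠ p ∧ f k ≠ q ∧ f k ≠ r ∧ f k ≠ s) :
    ∀ i, pairSwap f p q r s (pairSwap f p q r s i) = i := by
  intro k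
  by_cases h1 : k = p
  · subst h1; simp [pairSwap, hpq, hpr, hps, hqr, hqs, hrs, hpq.symm]
  by_cases h2 : k = q
  · subst h2; simp [pairSwap, hpq, hpr, hps, hqr, hqs, hrs, hpq.symm]
  by_cases h3 : k = r
  · subst h3; simp [pairSwap, hpr.symm, hqr.symm, hps.symm, hqs.symm, hrs, hrs.symm]
  by_cases h4 : k = s
  · subst h4; simp [pairSwap, hpr.symm, hqr.symm, hps.symm, hqs.symm, hrs, hrs.symm]
  · obtain ⟨c1, c2, c3, c4⟩ := hclosed k h1 h2 h3 h4
    simp [pairSwap, h1, h2, h3, h4, c1, c2, c3, c4, hinv k]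

private lemma pairSwap_nofix {m : ℕ} (f : Fin m → Fin m) (p q r s : Fin m)
    (hnf : ∀ i, f i ≠ i)
    (hpq : p ≠ q) (hrs : r ≠ s) :
    ∀ i, pairSwap f p q r s i ≠ i := by
  intro k
  by_cases h1 : k = p
  · subst h1; simp [pairSwap, hpq.symm]
  by_cases h2 : k = q
  · subst h2; simp [pairSwap, h1, hpq]
  by_cases h3 : k = r
  · subst h3; simp [pairSwap, h1, h2, hrs.symm]
  by_cases h4 : k = s
  · subst h4; simp [pairSwap, h1, h2, h3, hrs]
  · simp [pairSwap, h1, h2, h3, h4, hnf k]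

/-- The Plücker relation for 2×2 minors. -/
private lemma delta_syz {n : ℕ} (a b c d : Fin (2 * n)) :
    Delta a c * Delta b d = Delta a b * Delta c d + Delta a d * Delta b c := by
  unfold Delta; ring

/-- Peeling off two blocks from the product `Δ_M`. -/
private lemma DeltaM_split {n : ℕ} (N : PM n) (p q : Fin (2 * n))
    (hp : p < N.f p) (hq : q < N.f q) (hpq : p ≠ q) :
    DeltaM N = Delta p (N.f p) * (Delta q (N.f q) *
      ∏ i ∈ ((Finset.univ.filter (fun i => i < N.f i)).erase p).erase q,
        Delta i (N.f i)) := by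
  have hpS : p ∈ Finset.univ.filter (fun i => i < N.f i) := by simp [hp]
  have hqS : q ∈ (Finset.univ.filter (fun i => i < N.f i)).erase p := by
    simp [hq, hpq.symm]
  rw [DeltaM, ← Finset.mul_prod_erase _ _ hpS, ← Finset.mul_prod_erase _ _ hqS]

/-- Injection from crossings of the `a∼b, c∼d` resolution into crossings of `a∼c, b∼d`. -/
private def uphi {m : ℕ} (f : Fin m → Fin m) (a b c : Fin m) :
    Fin m × Fin m → Fin m × Fin m
  | (i, j) =>
    if i = a then (if f j < c then (j, b) else (a, j))
    else if i = c then (b, j)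
    else if j = c then (if b < i then (a, i) else (i, b))
    else (i, j)

private def upsi {m : ℕ} (f : Fin m → Fin m) (a b c : Fin m) :
    Fin m × Fin m → Fin m × Fin m
  | (u, v) =>
    if v = b then (if f u < c then (a, u) else (u, c))
    else if u = a then (if v < b then (a, v) else (v, c))
    else if u = b then (c, v)
    else (u, v)

/-- The key counting lemma: the uncrossed matching `g` has strictly fewer crossings.
`g` pairs `a∼b`, `c∼d`; `f` pairs `a∼c`, `b∼d`. -/
private lemma cross_aux1 {m : ℕ} (f g : Fin m → Fin m) (a b c d : Fin m)
    (hab : a < b) (hbc : b < c) (hcd : c < d)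
    (hfa : f a = c) (hfb : f b = d) (hfc : f c = a) (hfd : f d = b)
    (hga : g a = b) (hgb : g b = a) (hgc : g c = d) (hgd : g d = c)
    (hgf : ∀ k, k ≠ a → k ≠ b → k ≠ c → k ≠ d → g k = f k)
    (hclosed : ∀ k, k ≠ a → k ≠ b → k ≠ c → k ≠ d →
      f k ≠ a ∧ f k ≠ b ∧ f k ≠ c ∧ f k ≠ d) :
    ((Finset.univ : Finset (Fin m × Fin m)).filter
      (fun p => p.1 < p.2 ∧ p.2 < g p.1 ∧ g p.1 < g p.2)).card <
    ((Finset.univ : Finset (Fin m × Fin m)).filter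
      (fun p => p.1 < p.2 ∧ p.2 < f p.1 ∧ f p.1 < f p.2)).card := by
  classical
  set Tg := (Finset.univ : Finset (Fin m × Fin m)).filter
      (fun p => p.1 < p.2 ∧ p.2 < g p.1 ∧ g p.1 < g p.2) with hTg
  set Tf := (Finset.univ : Finset (Fin m × Fin m)).filter
      (fun p => p.1 < p.2 ∧ p.2 < f p.1 ∧ f p.1 < f p.2) with hTf
  have key : ∀ p ∈ Tg, (uphi f a b c p ∈ Tf ∧ uphi f a b c p ≠ (a, b)) ∧
      upsi f a b c (uphi f a b c p) = p := by
    rintro ⟨i, j⟩ hp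
    rw [hTg, Finset.mem_filter] at hp
    obtain ⟨-, h1, h2, h3⟩ := hp
    simp only at h1 h2 h3
    by_cases hia : i = a
    · rw [hia] at h1 h2 h3 ⊢
      rw [hga] at h2 h3
      have hja : j ≠ a := ne_of_gt h1
      have hjb : j ≠ b := ne_of_lt h2
      have hjc : j ≠ c := ne_of_lt (h2.trans hbc)
      have hjd : j ≠ d := ne_of_lt (h2.trans (hbc.trans hcd))
      rw [hgf j hja hjb hjc hjd] at h3
      obtain ⟨c1, c2, c3, c4⟩ := hclosed j hja hjb hjc hjd
      by_cases hyc : f j < c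
      · have hv : uphi f a b c (a, j) = (j, b) := by simp [uphi, hyc]
        rw [hv]
        refine ⟨⟨?_, fun h => hja (congrArg Prod.fst h)⟩, ?_⟩
        · rw [hTf, Finset.mem_filter]
          exact ⟨Finset.mem_univ _, h2, h3, by rw [hfb]; exact hyc.trans hcd⟩
        · simp [upsi, hyc]
      · have hcj : c < f j := lt_of_le_of_ne (not_lt.mp hyc) (Ne.symm c3)
        have hv : uphi f a b c (a, j) = (a, j) := by simp [uphi, hyc]
        rw [hv]
        refine ⟨⟨?_, fun h => hjb (congrArg Prod.snd h)⟩, ?_⟩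
        · rw [hTf, Finset.mem_filter]
          exact ⟨Finset.mem_univ _, h1, by rw [hfa]; exact h2.trans hbc,
            by rw [hfa]; exact hcj⟩
        · simp [upsi, hjb, h2]
    · by_cases hic : i = c
      · rw [hic] at h1 h2 h3 ⊢
        rw [hgc] at h2 h3
        have hja : j ≠ a := ne_of_gt ((hab.trans hbc).trans h1)
        have hjb : j ≠ b := ne_of_gt (hbc.trans h1)
        have hjc : j ≠ c := ne_of_gt h1
        have hjd : j ≠ d := ne_of_lt h2
        rw [hgf j hja hjb hjc hjd] at h3
        have hv : uphi f a b c (c, j) = (b, j) := by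
          simp [uphi, (hab.trans hbc).ne']
        rw [hv]
        refine ⟨⟨?_, fun h => hab.ne' (congrArg Prod.fst h)⟩, ?_⟩
        · rw [hTf, Finset.mem_filter]
          exact ⟨Finset.mem_univ _, hbc.trans h1, by rw [hfb]; exact h2,
            by rw [hfb]; exact h3⟩
        · simp [upsi, hjb, hab.ne']
      · have hib : i ≠ b := by
          intro h; rw [h, hgb] at h2; rw [h] at h1
          exact absurd (h1.trans h2) (not_lt.mpr hab.le)
        have hid : i ≠ d := by
          intro h; rw [h, hgd] at h2; rw [h] at h1
          exact absurd (h1.trans h2) (not_lt.mpr hcd.le)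
        rw [hgf i hia hib hic hid] at h2 h3
        obtain ⟨d1, d2, d3, d4⟩ := hclosed i hia hib hic hid
        by_cases hjc : j = c
        · rw [hjc] at h1 h2 h3 ⊢
          rw [hgc] at h3
          by_cases hbi : b < i
          · have hv : uphi f a b c (i, c) = (a, i) := by simp [uphi, hia, hic, hbi]
            rw [hv]
            refine ⟨⟨?_, fun h => hbi.ne' (congrArg Prod.snd h)⟩, ?_⟩
            · rw [hTf, Finset.mem_filter]
              exact ⟨Finset.mem_univ _, hab.trans hbi, by rw [hfa]; exact h1,
                by rw [hfa]; exact h2⟩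
            · simp [upsi, hbi.ne', not_lt.mpr hbi.le]
          · have hib' : i < b := lt_of_le_of_ne (not_lt.mp hbi) hib
            have hv : uphi f a b c (i, c) = (i, b) := by simp [uphi, hia, hic, hbi]
            rw [hv]
            refine ⟨⟨?_, fun h => hia (congrArg Prod.fst h)⟩, ?_⟩
            · rw [hTf, Finset.mem_filter]
              exact ⟨Finset.mem_univ _, hib', hbc.trans h2, by rw [hfb]; exact h3⟩
            · simp [upsi, not_lt.mpr h2.le]
        · by_cases hja : j = a
          · rw [hja] at h1 h2 h3 ⊢
            rw [hga] at h3
            have hv : uphi f a b c (i, a) = (i, a) := by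
              simp [uphi, hia, hic, (hab.trans hbc).ne]
            rw [hv]
            refine ⟨⟨?_, fun h => hia (congrArg Prod.fst h)⟩, ?_⟩
            · rw [hTf, Finset.mem_filter]
              exact ⟨Finset.mem_univ _, h1, h2, by rw [hfa]; exact h3.trans hbc⟩
            · simp [upsi, hab.ne, hia, hib]
          · have hjb : j ≠ b := by
              intro h; rw [h, hgb] at h3; rw [h] at h2
              exact absurd (h2.trans h3) (not_lt.mpr hab.le)
            have hjd : j ≠ d := by
              intro h; rw [h, hgd] at h3; rw [h] at h2
              exact absurd (h2.trans h3) (not_lt.mpr hcd.le)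
            rw [hgf j hja hjb hjc hjd] at h3
            have hv : uphi f a b c (i, j) = (i, j) := by simp [uphi, hia, hic, hjc]
            rw [hv]
            refine ⟨⟨?_, fun h => hia (congrArg Prod.fst h)⟩, ?_⟩
            · rw [hTf, Finset.mem_filter]
              exact ⟨Finset.mem_univ _, h1, h2, h3⟩
            · simp [upsi, hjb, hia, hib]
  have hmemab : (a, b) ∈ Tf := by
    rw [hTf, Finset.mem_filter]
    exact ⟨Finset.mem_univ _, hab, by rw [hfa]; exact hbc,
      by rw [hfa, hfb]; exact hcd⟩
  calc Tg.card ≤ (Tf.erase (a, b)).card := by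
        apply Finset.card_le_card_of_injOn (uphi f a b c)
        · intro p hp
          exact Finset.mem_erase.mpr ⟨(key p hp).1.2, (key p hp).1.1⟩
        · intro p hp q hq h
          have := congrArg (upsi f a b c) h
          rwa [(key p (Finset.mem_coe.mp hp)).2, (key q (Finset.mem_coe.mp hq)).2] at this
    _ < Tf.card := Finset.card_erase_lt_of_mem hmemab

/-- Injection from crossings of the `a∼d, b∼c` resolution into crossings of `a∼c, b∼d`. -/
private def uphi2 {m : ℕ} (f : Fin m → Fin m) (a b c d : Fin m) :
    Fin m × Fin m → Fin m × Fin m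
  | (i, j) =>
    if i = a then (if j < c then (a, j) else (b, j))
    else if i = b then (if f j < d then (a, j) else (b, j))
    else if j = a then (if f i < c then (i, a) else (i, b))
    else (i, j)

private def upsi2 {m : ℕ} (f : Fin m → Fin m) (a b c d : Fin m) :
    Fin m × Fin m → Fin m × Fin m
  | (u, v) =>
    if u = a then (if f v < d then (b, v) else (a, v))
    else if u = b then (if v < c then (b, v) else (a, v))
    else if v = b then (if f u < c then (u, b) else (u, a))
    else (u, v)

/-- Same for the nested resolution: `g` pairs `a∼d`, `b∼c`; `f` pairs `a∼c`, `b∼d`. -/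
private lemma cross_aux2 {m : ℕ} (f g : Fin m → Fin m) (a b c d : Fin m)
    (hab : a < b) (hbc : b < c) (hcd : c < d)
    (hfa : f a = c) (hfb : f b = d) (hfc : f c = a) (hfd : f d = b)
    (hga : g a = d) (hgb : g b = c) (hgc : g c = b) (hgd : g d = a)
    (hgf : ∀ k, k ≠ a → k ≠ b → k ≠ c → k ≠ d → g k = f k)
    (hclosed : ∀ k, k ≠ a → k ≠ b → k ≠ c → k ≠ d →
      f k ≠ a ∧ f k ≠ b ∧ f k ≠ c ∧ f k ≠ d) :
    ((Finset.univ : Finset (Fin m × Fin m)).filter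
      (fun p => p.1 < p.2 ∧ p.2 < g p.1 ∧ g p.1 < g p.2)).card <
    ((Finset.univ : Finset (Fin m × Fin m)).filter
      (fun p => p.1 < p.2 ∧ p.2 < f p.1 ∧ f p.1 < f p.2)).card := by
  classical
  set Tg := (Finset.univ : Finset (Fin m × Fin m)).filter
      (fun p => p.1 < p.2 ∧ p.2 < g p.1 ∧ g p.1 < g p.2) with hTg
  set Tf := (Finset.univ : Finset (Fin m × Fin m)).filter
      (fun p => p.1 < p.2 ∧ p.2 < f p.1 ∧ f p.1 < f p.2) with hTf
  have key : ∀ p ∈ Tg, (uphi2 f a b c d p ∈ Tf ∧ uphi2 f a b c d p ≠ (a, b)) ∧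
      upsi2 f a b c d (uphi2 f a b c d p) = p := by
    rintro ⟨i, j⟩ hp
    rw [hTg, Finset.mem_filter] at hp
    obtain ⟨-, h1, h2, h3⟩ := hp
    simp only at h1 h2 h3
    by_cases hia : i = a
    · rw [hia] at h1 h2 h3 ⊢
      rw [hga] at h2 h3
      have hja : j ≠ a := ne_of_gt h1
      have hjd : j ≠ d := ne_of_lt h2
      have hjb : j ≠ b := by
        intro h; rw [h, hgb] at h3; exact absurd h3 (not_lt.mpr hcd.le)
      have hjc : j ≠ c := by
        intro h; rw [h, hgc] at h3; exact absurd h3 (not_lt.mpr (hbc.trans hcd).le)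
      rw [hgf j hja hjb hjc hjd] at h3
      obtain ⟨c1, c2, c3, c4⟩ := hclosed j hja hjb hjc hjd
      by_cases hjlt : j < c
      · have hv : uphi2 f a b c d (a, j) = (a, j) := by simp [uphi2, hjlt]
        rw [hv]
        refine ⟨⟨?_, fun h => hjb (congrArg Prod.snd h)⟩, ?_⟩
        · rw [hTf, Finset.mem_filter]
          exact ⟨Finset.mem_univ _, h1, by rw [hfa]; exact hjlt,
            by rw [hfa]; exact hcd.trans h3⟩
        · simp [upsi2, not_lt.mpr h3.le]
      · have hcj : c < j := lt_of_le_of_ne (not_lt.mp hjlt) (Ne.symm hjc)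
        have hv : uphi2 f a b c d (a, j) = (b, j) := by simp [uphi2, hjlt]
        rw [hv]
        refine ⟨⟨?_, fun h => hab.ne' (congrArg Prod.fst h)⟩, ?_⟩
        · rw [hTf, Finset.mem_filter]
          exact ⟨Finset.mem_univ _, hbc.trans hcj, by rw [hfb]; exact h2,
            by rw [hfb]; exact h3⟩
        · simp [upsi2, hab.ne', hjlt]
    · by_cases hib : i = b
      · rw [hib] at h1 h2 h3 ⊢
        rw [hgb] at h2 h3
        have hja : j ≠ a := ne_of_gt (hab.trans h1)
        have hjb : j ≠ b := ne_of_gt h1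
        have hjc : j ≠ c := ne_of_lt h2
        have hjd : j ≠ d := ne_of_lt (h2.trans hcd)
        rw [hgf j hja hjb hjc hjd] at h3
        obtain ⟨c1, c2, c3, c4⟩ := hclosed j hja hjb hjc hjd
        by_cases hyd : f j < d
        · have hv : uphi2 f a b c d (b, j) = (a, j) := by
            simp [uphi2, hab.ne', hyd]
          rw [hv]
          refine ⟨⟨?_, fun h => hjb (congrArg Prod.snd h)⟩, ?_⟩
          · rw [hTf, Finset.mem_filter]
            exact ⟨Finset.mem_univ _, hab.trans h1, by rw [hfa]; exact h2,
              by rw [hfa]; exact h3⟩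
          · simp [upsi2, hyd]
        · have hdj : d < f j := lt_of_le_of_ne (not_lt.mp hyd) (Ne.symm c4)
          have hv : uphi2 f a b c d (b, j) = (b, j) := by
            simp [uphi2, hab.ne', hyd]
          rw [hv]
          refine ⟨⟨?_, fun h => hab.ne' (congrArg Prod.fst h)⟩, ?_⟩
          · rw [hTf, Finset.mem_filter]
            exact ⟨Finset.mem_univ _, h1, by rw [hfb]; exact h2.trans hcd,
              by rw [hfb]; exact hdj⟩
          · simp [upsi2, hab.ne', h2]
      · have hic : i ≠ c := by
          intro h; rw [h, hgc] at h2; rw [h] at h1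
          exact absurd (h1.trans h2) (not_lt.mpr hbc.le)
        have hid : i ≠ d := by
          intro h; rw [h, hgd] at h2; rw [h] at h1
          exact absurd (h1.trans h2) (not_lt.mpr ((hab.trans hbc).trans hcd).le)
        rw [hgf i hia hib hic hid] at h2 h3
        obtain ⟨d1, d2, d3, d4⟩ := hclosed i hia hib hic hid
        by_cases hja : j = a
        · rw [hja] at h1 h2 h3 ⊢
          rw [hga] at h3
          by_cases hyc : f i < c
          · have hv : uphi2 f a b c d (i, a) = (i, a) := by
              simp [uphi2, hia, hib, hyc]
            rw [hv]
            refine ⟨⟨?_, fun h => hab.ne (congrArg Prod.snd h)⟩, ?_⟩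
            · rw [hTf, Finset.mem_filter]
              exact ⟨Finset.mem_univ _, h1, h2, by rw [hfa]; exact hyc⟩
            · simp [upsi2, hia, hib, hab.ne]
          · have hcf : c < f i := lt_of_le_of_ne (not_lt.mp hyc) (Ne.symm d3)
            have hv : uphi2 f a b c d (i, a) = (i, b) := by
              simp [uphi2, hia, hib, hyc]
            rw [hv]
            refine ⟨⟨?_, fun h => hia (congrArg Prod.fst h)⟩, ?_⟩
            · rw [hTf, Finset.mem_filter]
              exact ⟨Finset.mem_univ _, h1.trans hab, hbc.trans hcf,
                by rw [hfb]; exact h3⟩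
            · simp [upsi2, hia, hib, hyc]
        · by_cases hjb : j = b
          · rw [hjb] at h1 h2 h3 ⊢
            rw [hgb] at h3
            have hv : uphi2 f a b c d (i, b) = (i, b) := by
              simp [uphi2, hia, hib, hab.ne']
            rw [hv]
            refine ⟨⟨?_, fun h => hia (congrArg Prod.fst h)⟩, ?_⟩
            · rw [hTf, Finset.mem_filter]
              exact ⟨Finset.mem_univ _, h1, h2, by rw [hfb]; exact h3.trans hcd⟩
            · simp [upsi2, hia, hib, h3]
          · have hjc : j ≠ c := by
              intro h; rw [h, hgc] at h3; rw [h] at h2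
              exact absurd (h2.trans h3) (not_lt.mpr hbc.le)
            have hjd : j ≠ d := by
              intro h; rw [h, hgd] at h3; rw [h] at h2
              exact absurd (h2.trans h3) (not_lt.mpr ((hab.trans hbc).trans hcd).le)
            rw [hgf j hja hjb hjc hjd] at h3
            have hv : uphi2 f a b c d (i, j) = (i, j) := by
              simp [uphi2, hia, hib, hja]
            rw [hv]
            refine ⟨⟨?_, fun h => hia (congrArg Prod.fst h)⟩, ?_⟩
            · rw [hTf, Finset.mem_filter]
              exact ⟨Finset.mem_univ _, h1, h2, h3⟩
            · simp [upsi2, hia, hib, hjb]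
  have hmemab : (a, b) ∈ Tf := by
    rw [hTf, Finset.mem_filter]
    exact ⟨Finset.mem_univ _, hab, by rw [hfa]; exact hbc,
      by rw [hfa, hfb]; exact hcd⟩
  calc Tg.card ≤ (Tf.erase (a, b)).card := by
        apply Finset.card_le_card_of_injOn (uphi2 f a b c d)
        · intro p hp
          exact Finset.mem_erase.mpr ⟨(key p hp).1.2, (key p hp).1.1⟩
        · intro p hp q hq h
          have := congrArg (upsi2 f a b c d) h
          rwa [(key p (Finset.mem_coe.mp hp)).2, (key q (Finset.mem_coe.mp hq)).2] at this
    _ < Tf.card := Finset.card_erase_lt_of_mem hmemab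

theorem uncrossing_syzygy (n : ℕ) (M : PM n) (a b c d : Fin (2 * n))
    (hab : a < b) (hbc : b < c) (hcd : c < d)
    (hac : M.f a = c) (hbd : M.f b = d) :
    ∃ M' M'' : PM n,
      (M'.f a = b ∧ M'.f c = d ∧ ∀ k, k ≠ a → k ≠ b → k ≠ c → k ≠ d → M'.f k = M.f k) ∧
      (M''.f a = d ∧ M''.f b = c ∧ ∀ k, k ≠ a → k ≠ b → k ≠ c → k ≠ d → M''.f k = M.f k) ∧
      DeltaM M = DeltaM M' + DeltaM M'' ∧
      crossings M' < crossings M ∧ crossings M'' < crossings M := by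
  have hnab : a ≠ b := ne_of_lt hab
  have hnac : a ≠ c := ne_of_lt (hab.trans hbc)
  have hnad : a ≠ d := ne_of_lt ((hab.trans hbc).trans hcd)
  have hnbc : b ≠ c := ne_of_lt hbc
  have hnbd : b ≠ d := ne_of_lt (hbc.trans hcd)
  have hncd : c ≠ d := ne_of_lt hcd
  have hca : M.f c = a := by rw [← hac, M.invol]
  have hdb : M.f d = b := by rw [← hbd, M.invol]
  have hclosed : ∀ k, k ≠ a → k ≠ b → k ≠ c → k ≠ d →
      M.f k ≠ a ∧ M.f k ≠ b ∧ M.f k ≠ c ∧ M.f k ≠ d := by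
    intro k h1 h2 h3 h4
    refine ⟨fun h => h3 ?_, fun h => h4 ?_, fun h => h1 ?_, fun h => h2 ?_⟩
    · rw [← M.invol k, h, hac]
    · rw [← M.invol k, h, hbd]
    · rw [← M.invol k, h, hca]
    · rw [← M.invol k, h, hdb]
  -- construct M'
  set f' := pairSwap M.f a b c d with hf'
  have hf'a : f' a = b := by simp [hf', pairSwap]
  have hf'b : f' b = a := by simp [hf', pairSwap, hnab]
  have hf'c : f' c = d := by simp [hf', pairSwap, hnac.symm, hnbc.symm]
  have hf'd : f' d = c := by simp [hf', pairSwap, hnad.symm, hnbd.symm, hncd.symm]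
  have hf'k : ∀ k, k ≠ a → k ≠ b → k ≠ c → k ≠ d → f' k = M.f k := by
    intro k h1 h2 h3 h4; simp [hf', pairSwap, h1, h2, h3, h4]
  set M' : PM n := ⟨f', pairSwap_invol M.f a b c d M.invol hnab hnac hnad hnbc hnbd hncd hclosed,
    pairSwap_nofix M.f a b c d M.nofix hnab hncd⟩ with hM'
  -- construct M''
  set f'' := pairSwap M.f a d b c with hf''
  have hf''a : f'' a = d := by simp [hf'', pairSwap]
  have hf''d : f'' d = a := by simp [hf'', pairSwap, hnad]
  have hf''b : f'' b = c := by simp [hf'', pairSwap, hnab.symm, hnbd]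
  have hf''c : f'' c = b := by simp [hf'', pairSwap, hnac.symm, hncd, hnbc.symm]
  have hf''k : ∀ k, k ≠ a → k ≠ b → k ≠ c → k ≠ d → f'' k = M.f k := by
    intro k h1 h2 h3 h4; simp [hf'', pairSwap, h1, h2, h3, h4]
  have hclosed2 : ∀ k, k ≠ a → k ≠ d → k ≠ b → k ≠ c →
      M.f k ≠ a ∧ M.f k ≠ d ∧ M.f k ≠ b ∧ M.f k ≠ c := by
    intro k h1 h2 h3 h4
    obtain ⟨c1, c2, c3, c4⟩ := hclosed k h1 h3 h4 h2
    exact ⟨c1, c4, c2, c3⟩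
  set M'' : PM n := ⟨f'', pairSwap_invol M.f a d b c M.invol hnad hnab hnac
      (Ne.symm hnbd) (Ne.symm hncd) hnbc hclosed2,
    pairSwap_nofix M.f a d b c M.nofix hnad hnbc⟩ with hM''
  refine ⟨M', M'', ⟨hf'a, hf'c, hf'k⟩, ⟨hf''a, hf''b, hf''k⟩, ?_, ?_, ?_⟩
  · -- the syzygy
    have hM'a : M'.f a = b := hf'a
    have hM'b : M'.f b = a := hf'b
    have hM'c : M'.f c = d := hf'c
    have hM'd : M'.f d = c := hf'd
    have hM'k : ∀ k, k ≠ a → k ≠ b → k ≠ c → k ≠ d → M'.f k = M.f k := hf'k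
    have hMa'' : M''.f a = d := hf''a
    have hMb'' : M''.f b = c := hf''b
    have hMc'' : M''.f c = b := hf''c
    have hMd'' : M''.f d = a := hf''d
    have hMk'' : ∀ k, k ≠ a → k ≠ b → k ≠ c → k ≠ d → M''.f k = M.f k := hf''k
    have ha' : a < M.f a := by rw [hac]; exact hab.trans hbc
    have hb' : b < M.f b := by rw [hbd]; exact hbc.trans hcd
    have ha'' : a < M'.f a := by rw [hM'a]; exact hab
    have hc'' : c < M'.f c := by rw [hM'c]; exact hcd
    have ha3 : a < M''.f a := by rw [hMa'']; exact (hab.trans hbc).trans hcd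
    have hb3 : b < M''.f b := by rw [hMb'']; exact hbc
    have hset' : ((Finset.univ.filter (fun i => i < M'.f i)).erase a).erase c
        = ((Finset.univ.filter (fun i => i < M.f i)).erase a).erase b := by
      ext k
      simp only [Finset.mem_erase, Finset.mem_filter, Finset.mem_univ, true_and]
      constructor
      · rintro ⟨hkc, hka, hlt⟩
        have hkb : k ≠ b := by
          intro h; rw [h, hM'b] at hlt; exact absurd hlt (not_lt.mpr hab.le)
        have hkd : k ≠ d := by
          intro h; rw [h, hM'd] at hlt; exact absurd hlt (not_lt.mpr hcd.le)
        exact ⟨hkb, hka, by rwa [hM'k k hka hkb hkc hkd] at hlt⟩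
      · rintro ⟨hkb, hka, hlt⟩
        have hkc : k ≠ c := by
          intro h; rw [h, hca] at hlt; exact absurd hlt (not_lt.mpr (hab.trans hbc).le)
        have hkd : k ≠ d := by
          intro h; rw [h, hdb] at hlt; exact absurd hlt (not_lt.mpr (hbc.trans hcd).le)
        exact ⟨hkc, hka, by rwa [hM'k k hka hkb hkc hkd]⟩
    have hset'' : ((Finset.univ.filter (fun i => i < M''.f i)).erase a).erase b
        = ((Finset.univ.filter (fun i => i < M.f i)).erase a).erase b := by
      ext k
      simp only [Finset.mem_erase, Finset.mem_filter, Finset.mem_univ, true_and]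
      constructor
      · rintro ⟨hkb, hka, hlt⟩
        have hkc : k ≠ c := by
          intro h; rw [h, hMc''] at hlt; exact absurd hlt (not_lt.mpr hbc.le)
        have hkd : k ≠ d := by
          intro h; rw [h, hMd''] at hlt
          exact absurd hlt (not_lt.mpr ((hab.trans hbc).trans hcd).le)
        exact ⟨hkb, hka, by rwa [hMk'' k hka hkb hkc hkd] at hlt⟩
      · rintro ⟨hkb, hka, hlt⟩
        have hkc : k ≠ c := by
          intro h; rw [h, hca] at hlt; exact absurd hlt (not_lt.mpr (hab.trans hbc).le)
        have hkd : k ≠ d := by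
          intro h; rw [h, hdb] at hlt; exact absurd hlt (not_lt.mpr (hbc.trans hcd).le)
        exact ⟨hkb, hka, by rwa [hMk'' k hka hkb hkc hkd]⟩
    have hcong' : ∀ k ∈ ((Finset.univ.filter (fun i => i < M.f i)).erase a).erase b,
        Delta k (M'.f k) = Delta k (M.f k) := by
      intro k hk
      simp only [Finset.mem_erase, Finset.mem_filter, Finset.mem_univ, true_and] at hk
      obtain ⟨hkb, hka, hlt⟩ := hk
      have hkc : k ≠ c := by
        intro h; rw [h, hca] at hlt; exact absurd hlt (not_lt.mpr (hab.trans hbc).le)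
      have hkd : k ≠ d := by
        intro h; rw [h, hdb] at hlt; exact absurd hlt (not_lt.mpr (hbc.trans hcd).le)
      rw [hM'k k hka hkb hkc hkd]
    have hcong'' : ∀ k ∈ ((Finset.univ.filter (fun i => i < M.f i)).erase a).erase b,
        Delta k (M''.f k) = Delta k (M.f k) := by
      intro k hk
      simp only [Finset.mem_erase, Finset.mem_filter, Finset.mem_univ, true_and] at hk
      obtain ⟨hkb, hka, hlt⟩ := hk
      have hkc : k ≠ c := by
        intro h; rw [h, hca] at hlt; exact absurd hlt (not_lt.mpr (hab.trans hbc).le)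
      have hkd : k ≠ d := by
        intro h; rw [h, hdb] at hlt; exact absurd hlt (not_lt.mpr (hbc.trans hcd).le)
      rw [hMk'' k hka hkb hkc hkd]
    rw [DeltaM_split M a b ha' hb' hnab, DeltaM_split M' a c ha'' hc'' hnac,
      DeltaM_split M'' a b ha3 hb3 hnab, hset', hset'',
      Finset.prod_congr rfl hcong', Finset.prod_congr rfl hcong'',
      hac, hbd, hM'a, hM'c, hMa'', hMb'']
    have key := delta_syz a b c d
    set P := ∏ i ∈ ((Finset.univ.filter (fun i => i < M.f i)).erase a).erase b,
      Delta i (M.f i) with hP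
    calc Delta a c * (Delta b d * P) = (Delta a c * Delta b d) * P := by ring
      _ = (Delta a b * Delta c d + Delta a d * Delta b c) * P := by rw [key]
      _ = Delta a b * (Delta c d * P) + Delta a d * (Delta b c * P) := by ring
  · exact cross_aux1 M.f f' a b c d hab hbc hcd hac hbd hca hdb hf'a hf'b hf'c hf'd hf'k hclosed
  · exact cross_aux2 M.f f'' a b c d hab hbc hcd hac hbd hca hdb hf''a hf''b hf''c hf''d hf''k hclosed
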